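/- Define ξ(x) = x_1 x_2 x_3 and ζ(x) = (1 + x_2 f_1(x) − x_3 f_3(x))(1 + x_3 f_2(x) − x_1 f_1(x))(1 + x_1 f_3(x) − x_2 f_2(x)). Then for every x ∈ S²: ξ(R_H(x)) = ξ(x) ζ(x), ζ(x) ≤ 1, and ζ(x) = 1 if and only if x = c. In particular ξ(R_H(x)) ≤ ξ(x), so ξ is a decreasing Lyapunov function for R_H, strictly decreasing along interior orbits away from c. -/

import Mathlib

open Filter Topology

/-- The two-dimensional standard simplex `S²` in `ℝ³`. -/
def simplex2 : Set (Fin 3 → ℝ) :=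
  {x | (∀ k, 0 ≤ x k) ∧ x 0 + x 1 + x 2 = 1}

/-- The part `B³_+` of the unit `l_1`-ball lying in the positive orthant of `ℝ³`. -/
def ball3 : Set (Fin 3 → ℝ) :=
  {x | (∀ k, 0 ≤ x k) ∧ x 0 + x 1 + x 2 ≤ 1}

/-- Key algebraic identity behind three-variable AM–GM. -/
lemma amgm3_aux (p q r : ℝ) :
    (p+q+r)^3 - 27*(p*q*r) =
      (p+q+r)*((p-q)^2+(q-r)^2+(r-p)^2)/2
        + 3*(p*(q-r)^2+q*(r-p)^2+r*(p-q)^2) := by ring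

/-- Three-variable AM–GM with equality case, in the normalized form needed here. -/
lemma amgm3 (p q r : ℝ) (hp : 0 ≤ p) (hq : 0 ≤ q) (hr : 0 ≤ r)
    (hs : p + q + r ≤ 3) :
    p*q*r ≤ 1 ∧ (p*q*r = 1 → p = 1 ∧ q = 1 ∧ r = 1) := by
  have key := amgm3_aux p q r
  have hnn : 0 ≤ (p+q+r)*((p-q)^2+(q-r)^2+(r-p)^2)/2 := by positivity
  have hnn2 : 0 ≤ 3*(p*(q-r)^2+q*(r-p)^2+r*(p-q)^2) := by positivity
  have hsnn : 0 ≤ p + q + r := by linarith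
  have hcube : (p+q+r)^3 ≤ 27 := by
    calc (p+q+r)^3 ≤ 3^3 := pow_le_pow_left₀ hsnn hs 3
    _ = 27 := by norm_num
  have hle : p*q*r ≤ 1 := by linarith
  refine ⟨hle, fun heq => ?_⟩
  have hs3 : p + q + r = 3 := by
    have h27 : 27 ≤ (p+q+r)^3 := by linarith
    have h3 : 3 ≤ p + q + r := by
      by_contra hlt
      push_neg at hlt
      have : (p+q+r)^3 < 3^3 := by
        apply pow_lt_pow_left₀ hlt hsnn
        norm_num
      norm_num at this
      linarith
    linarith
  have hzero : (p+q+r)*((p-q)^2+(q-r)^2+(r-p)^2)/2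
      + 3*(p*(q-r)^2+q*(r-p)^2+r*(p-q)^2) = 0 := by
    rw [← key, hs3, heq]; ring
  have hsq : (p-q)^2+(q-r)^2+(r-p)^2 ≤ 0 := by
    rw [hs3] at hzero
    nlinarith [sq_nonneg (p-q), sq_nonneg (q-r), sq_nonneg (r-p)]
  have hpq : p = q := by nlinarith [sq_nonneg (p-q), sq_nonneg (q-r), sq_nonneg (r-p)]
  have hqr : q = r := by nlinarith [sq_nonneg (p-q), sq_nonneg (q-r), sq_nonneg (r-p)]
  refine ⟨by linarith, by linarith, by linarith⟩

/-- Rearrangement inequality for three similarly ordered triples (one cyclic shift). -/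
lemma rearrange3 (a0 a1 a2 b0 b1 b2 : ℝ)
    (h01 : b0 ≤ b1 ↔ a0 ≤ a1) (h10 : b1 ≤ b0 ↔ a1 ≤ a0)
    (h12 : b1 ≤ b2 ↔ a1 ≤ a2) (h21 : b2 ≤ b1 ↔ a2 ≤ a1)
    (h02 : b0 ≤ b2 ↔ a0 ≤ a2) (h20 : b2 ≤ b0 ↔ a2 ≤ a0) :
    a1 * b0 + a2 * b1 + a0 * b2 ≤ a0 * b0 + a1 * b1 + a2 * b2 := by
  rcases le_total a0 a1 with h | h <;> rcases le_total a1 a2 with h' | h' <;>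
    rcases le_total a0 a2 with h'' | h''
  · -- a0 ≤ a1 ≤ a2
    nlinarith [mul_nonneg (sub_nonneg.2 h) (sub_nonneg.2 (h01.2 h)),
      mul_nonneg (sub_nonneg.2 h'') (sub_nonneg.2 (h12.2 h'))]
  · -- a0 ≤ a1 ≤ a2 ≤ a0 : all equal
    have e1 : a0 = a1 := le_antisymm h (by linarith)
    have e2 : a1 = a2 := le_antisymm h' (by linarith)
    subst e1; subst e2; linarith
  · -- a0 ≤ a2 ≤ a1
    nlinarith [mul_nonneg (sub_nonneg.2 h'') (sub_nonneg.2 (h02.2 h'')),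
      mul_nonneg (sub_nonneg.2 h') (sub_nonneg.2 (h01.2 h))]
  · -- a2 ≤ a0 ≤ a1
    nlinarith [mul_nonneg (sub_nonneg.2 h) (sub_nonneg.2 (h01.2 h)),
      mul_nonneg (sub_nonneg.2 h'') (sub_nonneg.2 (h20.2 h'')),
      mul_nonneg (sub_nonneg.2 h'') (sub_nonneg.2 (h01.2 h))]
  · -- a1 ≤ a0 ≤ a2
    nlinarith [mul_nonneg (sub_nonneg.2 h'') (sub_nonneg.2 (h12.2 h')),
      mul_nonneg (sub_nonneg.2 h) (sub_nonneg.2 (h10.2 h))]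
  · -- a1 ≤ a2 ≤ a0
    nlinarith [mul_nonneg (sub_nonneg.2 h'') (sub_nonneg.2 (h20.2 h'')),
      mul_nonneg (sub_nonneg.2 h') (sub_nonneg.2 (h10.2 h))]
  · -- a2 ≤ a1 ≤ a0 ≤ a2 : all equal
    have e1 : a1 = a0 := le_antisymm h (by linarith)
    have e2 : a2 = a1 := le_antisymm h' (by linarith)
    subst e1; subst e2; linarith
  · -- a2 ≤ a1 ≤ a0
    nlinarith [mul_nonneg (sub_nonneg.2 h) (sub_nonneg.2 (h10.2 h)),
      mul_nonneg (sub_nonneg.2 h'') (sub_nonneg.2 (h21.2 h'))]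

set_option maxHeartbeats 1600000 in
/-- with `ξ(x) = x₁x₂x₃` and
`ζ(x) = (1 + x₂f₁ − x₃f₃)(1 + x₃f₂ − x₁f₁)(1 + x₁f₃ − x₂f₂)` one has
`ξ(R_H(x)) = ξ(x)ζ(x)`, `ζ(x) ≤ 1` with equality iff `x = c`; in particular
`ξ(R_H(x)) ≤ ξ(x)`, so `ξ` is a decreasing Lyapunov function for `R_H`. -/
theorem stmt_15
    (F R : (Fin 3 → ℝ) → (Fin 3 → ℝ))
    (hFdiff : ContDiffOn ℝ 1 F ball3)
    (hFsop : ∀ x ∈ ball3, ∀ i j, F x j ≤ F x i ↔ x j ≤ x i)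
    (hFpos : ∀ x ∈ ball3, ∀ k, 0 < F x k ∧ F x k ≤ 1)
    (hR0 : ∀ x, R x 0 = x 0 * (1 + x 1 * F x 0 - x 2 * F x 2))
    (hR1 : ∀ x, R x 1 = x 1 * (1 + x 2 * F x 1 - x 0 * F x 0))
    (hR2 : ∀ x, R x 2 = x 2 * (1 + x 0 * F x 2 - x 1 * F x 1)) :
    ∀ x ∈ simplex2, ∀ z : ℝ,
      z = (1 + x 1 * F x 0 - x 2 * F x 2) * (1 + x 2 * F x 1 - x 0 * F x 0) *
          (1 + x 0 * F x 2 - x 1 * F x 1) →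
      R x 0 * R x 1 * R x 2 = (x 0 * x 1 * x 2) * z ∧
      z ≤ 1 ∧ (z = 1 ↔ x = ![1/3, 1/3, 1/3]) ∧
      R x 0 * R x 1 * R x 2 ≤ x 0 * x 1 * x 2 := by
  intro x hx z hz
  obtain ⟨hxn, hxs⟩ := hx
  have hxb : x ∈ ball3 := ⟨hxn, hxs.le⟩
  have h0 := hxn 0
  have h1 := hxn 1
  have h2 := hxn 2
  obtain ⟨hf0pos, hf0le⟩ := hFpos x hxb 0
  obtain ⟨hf1pos, hf1le⟩ := hFpos x hxb 1
  obtain ⟨hf2pos, hf2le⟩ := hFpos x hxb 2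
  have sop := hFsop x hxb
  -- nonnegativity of the three factors
  have hp : 0 ≤ 1 + x 1 * F x 0 - x 2 * F x 2 := by
    nlinarith [mul_nonneg h1 hf0pos.le, mul_le_of_le_one_right h2 hf2le]
  have hq : 0 ≤ 1 + x 2 * F x 1 - x 0 * F x 0 := by
    nlinarith [mul_nonneg h2 hf1pos.le, mul_le_of_le_one_right h0 hf0le]
  have hr : 0 ≤ 1 + x 0 * F x 2 - x 1 * F x 1 := by
    nlinarith [mul_nonneg h0 hf2pos.le, mul_le_of_le_one_right h1 hf1le]
  -- rearrangement: sum of factors ≤ 3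
  have hre : x 1 * F x 0 + x 2 * F x 1 + x 0 * F x 2
      ≤ x 0 * F x 0 + x 1 * F x 1 + x 2 * F x 2 := by
    have := rearrange3 (x 0) (x 1) (x 2) (F x 0) (F x 1) (F x 2)
      (sop 1 0) (sop 0 1) (sop 2 1) (sop 1 2) (sop 2 0) (sop 0 2)
    linarith [this]
  have hsum : (1 + x 1 * F x 0 - x 2 * F x 2) + (1 + x 2 * F x 1 - x 0 * F x 0)
      + (1 + x 0 * F x 2 - x 1 * F x 1) ≤ 3 := by linarith
  obtain ⟨hzle, heqc⟩ := amgm3 _ _ _ hp hq hr hsum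
  have hxi : R x 0 * R x 1 * R x 2 = (x 0 * x 1 * x 2) * z := by
    rw [hR0, hR1, hR2, hz]; ring
  refine ⟨hxi, hz ▸ hzle, ?_, ?_⟩
  · constructor
    · intro hz1
      obtain ⟨hp1, hq1, hr1⟩ := heqc (hz ▸ hz1)
      have eA : x 1 * F x 0 = x 2 * F x 2 := by linarith
      have eB : x 2 * F x 1 = x 0 * F x 0 := by linarith
      have eC : x 0 * F x 2 = x 1 * F x 1 := by linarith
      have hall : x 0 = x 1 ∧ x 1 = x 2 := by
        rcases le_total (x 0) (x 1) with h | h <;> rcases le_total (x 1) (x 2) with h' | h' <;>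
          rcases le_total (x 0) (x 2) with h'' | h''
        · -- x0 ≤ x1 ≤ x2 : use eB
          have hf01 : F x 0 ≤ F x 1 := (sop 1 0).2 h
          have : x 2 ≤ x 0 := by
            nlinarith [mul_nonneg h2 (sub_nonneg.2 hf01)]
          exact ⟨le_antisymm h (by linarith), le_antisymm h' (by linarith)⟩
        · exact ⟨le_antisymm h (by linarith), le_antisymm h' (by linarith)⟩
        · -- x0 ≤ x2 ≤ x1 : use eC
          have hf21 : F x 2 ≤ F x 1 := (sop 1 2).2 h'
          have : x 1 ≤ x 0 := by
            nlinarith [mul_nonneg h1 (sub_nonneg.2 hf21)]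
          exact ⟨le_antisymm h this, le_antisymm (by linarith) h'⟩
        · -- x2 ≤ x0 ≤ x1 : use eA
          have hf20 : F x 2 ≤ F x 0 := (sop 0 2).2 h''
          have : x 1 ≤ x 2 := by
            nlinarith [mul_nonneg h1 (sub_nonneg.2 hf20)]
          exact ⟨le_antisymm h (by linarith), le_antisymm (by linarith) h'⟩
        · -- x1 ≤ x0 ≤ x2 : use eA
          have hf02 : F x 0 ≤ F x 2 := (sop 2 0).2 h''
          have : x 2 ≤ x 1 := by
            nlinarith [mul_nonneg h2 (sub_nonneg.2 hf02)]
          exact ⟨le_antisymm (by linarith) h, le_antisymm h' this⟩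
        · -- x1 ≤ x2 ≤ x0 : use eB then eA
          have hf10 : F x 1 ≤ F x 0 := (sop 0 1).2 h
          have h02' : x 0 ≤ x 2 := by
            nlinarith [mul_nonneg h0 (sub_nonneg.2 hf10)]
          have ef02 : F x 2 = F x 0 := le_antisymm ((sop 0 2).2 h'') ((sop 2 0).2 h02')
          rw [ef02] at eA
          have e12' : x 1 = x 2 := mul_right_cancel₀ (ne_of_gt hf0pos) eA
          constructor <;> linarith
        · exact ⟨le_antisymm (by linarith) h, le_antisymm (by linarith) h'⟩
        · -- x2 ≤ x1 ≤ x0 : use eB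
          have hf10 : F x 1 ≤ F x 0 := (sop 0 1).2 h
          have : x 0 ≤ x 2 := by
            nlinarith [mul_nonneg h0 (sub_nonneg.2 hf10)]
          exact ⟨le_antisymm (by linarith) h, le_antisymm (by linarith) h'⟩
      obtain ⟨e01, e12⟩ := hall
      have hx0 : x 0 = 1/3 := by linarith
      have hx1 : x 1 = 1/3 := by linarith
      have hx2 : x 2 = 1/3 := by linarith
      funext k
      fin_cases k <;>
        simp [Matrix.cons_val_zero, Matrix.cons_val_one, Matrix.head_cons] <;>
        norm_num [hx0, hx1, hx2]
    · intro hxc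
      have e0 : x 0 = 1/3 := by rw [hxc]; norm_num
      have e1 : x 1 = 1/3 := by rw [hxc]; norm_num
      have e2 : x 2 = 1/3 := by rw [hxc]; rfl
      have ef01 : F x 0 = F x 1 :=
        le_antisymm ((sop 1 0).2 (by rw [e0, e1])) ((sop 0 1).2 (by rw [e0, e1]))
      have ef12 : F x 1 = F x 2 :=
        le_antisymm ((sop 2 1).2 (by rw [e1, e2])) ((sop 1 2).2 (by rw [e1, e2]))
      rw [hz, e0, e1, e2, ef01, ef12]; ring
  · have hxyz : 0 ≤ x 0 * x 1 * x 2 := mul_nonneg (mul_nonneg h0 h1) h2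
    rw [hxi]
    nlinarith [hz ▸ hzle]
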